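/- If G is a connected simple graph of diameter at most 2, then svcfc(G) = χ(G). -/

import Mathlib

open SimpleGraph

/-- `f` is a strong conflict-free vertex-connection coloring of `G`: any two distinct
vertices are joined by a shortest path on which some color occurs exactly once. -/
def IsSCFVC {V α : Type*} [DecidableEq α] (G : SimpleGraph V) (f : V → α) : Prop :=
  ∀ u v : V, u ≠ v → ∃ p : G.Walk u v, p.length = G.dist u v ∧
    ∃ c : α, (p.support.map f).count c = 1

/-- The strong conflict-free vertex-connection number. -/
noncomputable def svcfc {V : Type*} (G : SimpleGraph V) : ℕ :=
  sInf {k | ∃ f : V → Fin k, IsSCFVC G f}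

lemma colorable_iff_scfvc {V : Type*} (G : SimpleGraph V) (hG : G.Connected)
    (hdiam : ∀ u v : V, G.dist u v ≤ 2) (k : ℕ) :
    G.Colorable k ↔ ∃ f : V → Fin k, IsSCFVC G f := by
  constructor
  · rintro ⟨C⟩
    refine ⟨C, fun u v hne => ?_⟩
    have hd0 : G.dist u v ≠ 0 := by
      intro h
      rcases dist_eq_zero_iff_eq_or_not_reachable.mp h with h' | h'
      · exact hne h'
      · exact h' (hG u v)
    by_cases hadj : G.Adj u v
    · have hd1 : G.dist u v = 1 := dist_eq_one_iff_adj.mpr hadj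
      refine ⟨Walk.cons hadj Walk.nil, by simp [hd1], C u, ?_⟩
      have := C.valid hadj
      simp [List.count_cons, this.symm]
    · have hd2 : G.dist u v = 2 := by
        have h1 : G.dist u v ≠ 1 := fun h => hadj (dist_eq_one_iff_adj.mp h)
        have := hdiam u v
        omega
      obtain ⟨p, hp⟩ := hG.exists_walk_length_eq_dist u v
      rw [hd2] at hp
      cases p with
      | nil => simp at hp
      | cons h1 q =>
        cases q with
        | nil => simp at hp
        | cons h2 r =>
          cases r with
          | cons h3 r' => simp at hp
          | nil =>
            rename_i w
            refine ⟨Walk.cons h1 (Walk.cons h2 Walk.nil), by rw [hd2]; rfl, ?_⟩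
            have huw := C.valid h1
            have hwv := C.valid h2
            by_cases huv : C u = C v
            · exact ⟨C w, by simp [List.count_cons, huw.symm, hwv, hwv.symm, huv]⟩
            · exact ⟨C u, by simp [List.count_cons, huw.symm, Ne.symm huv]⟩
  · rintro ⟨f, hf⟩
    refine ⟨⟨f, fun {u v} hadj => ?_⟩⟩
    obtain ⟨p, hp, c, hc⟩ := hf u v hadj.ne
    rw [dist_eq_one_iff_adj.mpr hadj] at hp
    cases p with
    | nil => simp at hp
    | cons h1 q =>
      cases q with
      | cons h2 r => simp at hp
      | nil =>
        intro heq
        simp [List.count_cons, heq] at hc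
        by_cases h : f v = c <;> simp [h] at hc

/-- For a connected graph of diameter at most `2`, `svcfc(G) = χ(G)`. -/
theorem stmt2 {V : Type*} [Fintype V] (G : SimpleGraph V) (hG : G.Connected)
    (hdiam : ∀ u v : V, G.dist u v ≤ 2) :
    (svcfc G : ℕ∞) = G.chromaticNumber := by
  have hS : {k | ∃ f : V → Fin k, IsSCFVC G f} = {k | G.Colorable k} := by
    ext k
    exact (colorable_iff_scfvc G hG hdiam k).symm
  have hcol : G.Colorable (Fintype.card V) := G.colorable_of_fintype
  rw [svcfc, hS, hcol.chromaticNumber_eq_sInf]
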